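/- Let γ ∈ [0,1), let μ₀ be a probability distribution on S, let T be a transition kernel from S × A to S, let r : S × A → ℝ with |r(s,a)| ≤ r_max for all (s,a), and let π and π̂ be policies on (S, A) with max_{s∈S} D_TV(π(·|s) ‖ π̂(·|s)) ≤ ε_π. Let (P_t) and (P̂_t) be the state-action occupancies generated from initial distribution μ₀ by the same kernel T under policies π and π̂ respectively, and let J(π) = ∑_{t=0}^∞ γ^t ∑_{s,a} P_t(s,a)·r(s,a) and J(π̂) = ∑_{t=0}^∞ γ^t ∑_{s,a} P̂_t(s,a)·r(s,a). Then |J(π) − J(π̂)| ≤ 2·r_max·∑_{t=0}^∞ γ^t·(t+1)·ε_π = 2·r_max·ε_π/(1−γ)². -/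

import Mathlib

open Finset

/-- Total-variation distance between two functions on a finite type. -/
noncomputable def tv {X : Type*} [Fintype X] (p q : X → ℝ) : ℝ :=
  (1 / 2) * ∑ x, |p x - q x|

section Aux
variable {S A : Type*} [Fintype S] [Fintype A]

/-- Occupancies remain probability distributions. -/
lemma occ_prob (μ0 : S → ℝ) (hμ0 : (∀ s, 0 ≤ μ0 s) ∧ ∑ s, μ0 s = 1)
    (T : S × A → S → ℝ) (hT : ∀ sa, (∀ s', 0 ≤ T sa s') ∧ ∑ s', T sa s' = 1)
    (π : S → A → ℝ) (hπ : ∀ s, (∀ a, 0 ≤ π s a) ∧ ∑ a, π s a = 1)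
    (P : ℕ → S × A → ℝ)
    (hP0 : ∀ sa : S × A, P 0 sa = μ0 sa.1 * π sa.1 sa.2)
    (hPrec : ∀ t (x : S × A),
      P (t + 1) x = ∑ sa : S × A, P t sa * T sa x.1 * π x.1 x.2) :
    ∀ t, (∀ sa, 0 ≤ P t sa) ∧ ∑ sa, P t sa = 1 := by
  intro t
  induction t with
  | zero =>
    refine ⟨fun sa => ?_, ?_⟩
    · rw [hP0]; exact mul_nonneg (hμ0.1 _) ((hπ _).1 _)
    · simp only [hP0]
      rw [Fintype.sum_prod_type]
      calc ∑ s, ∑ a, μ0 s * π s a = ∑ s, μ0 s * ∑ a, π s a := by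
            simp [Finset.mul_sum]
        _ = ∑ s, μ0 s := by simp [(fun s => (hπ s).2 : ∀ s, ∑ a, π s a = 1)]
        _ = 1 := hμ0.2
  | succ t ih =>
    refine ⟨fun sa => ?_, ?_⟩
    · rw [hPrec]
      exact Finset.sum_nonneg fun x _ =>
        mul_nonneg (mul_nonneg (ih.1 x) ((hT x).1 _)) ((hπ _).1 _)
    · simp only [hPrec]
      rw [Fintype.sum_prod_type]
      calc ∑ s', ∑ a', ∑ sa : S × A, P t sa * T sa s' * π s' a'
          = ∑ s', ∑ sa : S × A, ∑ a', P t sa * T sa s' * π s' a' := by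
            exact Finset.sum_congr rfl fun s' _ => Finset.sum_comm
        _ = ∑ s', ∑ sa : S × A, P t sa * T sa s' := by
            refine Finset.sum_congr rfl fun s' _ => Finset.sum_congr rfl fun sa _ => ?_
            rw [← Finset.mul_sum, (hπ s').2, mul_one]
        _ = ∑ sa : S × A, ∑ s', P t sa * T sa s' := Finset.sum_comm
        _ = ∑ sa : S × A, P t sa := by
            refine Finset.sum_congr rfl fun sa _ => ?_
            rw [← Finset.mul_sum, (hT sa).2, mul_one]
        _ = 1 := ih.2

end Aux

/-- Return gap between two policies under the same dynamics: bounded by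
2·r_max·∑ γ^t·(t+1)·ε_π = 2·r_max·ε_π/(1−γ)². -/
theorem return_gap_policy_shift
    {S A : Type*} [Fintype S] [Fintype A] [Nonempty S] [Nonempty A]
    (γ : ℝ) (hγ0 : 0 ≤ γ) (hγ1 : γ < 1)
    (μ0 : S → ℝ) (hμ0 : (∀ s, 0 ≤ μ0 s) ∧ ∑ s, μ0 s = 1)
    (T : S × A → S → ℝ)
    (hT : ∀ sa, (∀ s', 0 ≤ T sa s') ∧ ∑ s', T sa s' = 1)
    (r : S × A → ℝ) (rmax : ℝ) (hr : ∀ sa, |r sa| ≤ rmax)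
    (π πhat : S → A → ℝ)
    (hπ : ∀ s, (∀ a, 0 ≤ π s a) ∧ ∑ a, π s a = 1)
    (hπhat : ∀ s, (∀ a, 0 ≤ πhat s a) ∧ ∑ a, πhat s a = 1)
    (επ : ℝ)
    (hεπ : Finset.univ.sup' Finset.univ_nonempty (fun s => tv (π s) (πhat s)) ≤ επ)
    (P Phat : ℕ → S × A → ℝ)
    (hP0 : ∀ sa : S × A, P 0 sa = μ0 sa.1 * π sa.1 sa.2)
    (hPhat0 : ∀ sa : S × A, Phat 0 sa = μ0 sa.1 * πhat sa.1 sa.2)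
    (hPrec : ∀ t (x : S × A),
      P (t + 1) x = ∑ sa : S × A, P t sa * T sa x.1 * π x.1 x.2)
    (hPhatrec : ∀ t (x : S × A),
      Phat (t + 1) x = ∑ sa : S × A, Phat t sa * T sa x.1 * πhat x.1 x.2) :
    |(∑' t : ℕ, γ ^ t * ∑ sa : S × A, P t sa * r sa)
       - ∑' t : ℕ, γ ^ t * ∑ sa : S × A, Phat t sa * r sa|
      ≤ 2 * rmax * ∑' t : ℕ, γ ^ t * (t + 1) * επ
    ∧ 2 * rmax * ∑' t : ℕ, γ ^ t * (t + 1) * επ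
      = 2 * rmax * επ / (1 - γ) ^ 2 := by
  -- basic facts
  have hProb := occ_prob μ0 hμ0 T hT π hπ P hP0 hPrec
  have hProbhat := occ_prob μ0 hμ0 T hT πhat hπhat Phat hPhat0 hPhatrec
  have hrmax : 0 ≤ rmax := le_trans (abs_nonneg _) (hr (Classical.arbitrary _))
  -- per-state TV bound
  have hδ : ∀ s : S, ∑ a, |π s a - πhat s a| ≤ 2 * επ := by
    intro s
    have h1 : tv (π s) (πhat s) ≤ επ :=
      le_trans (Finset.le_sup' (fun s => tv (π s) (πhat s)) (Finset.mem_univ s)) hεπ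
    have : (1 / 2 : ℝ) * ∑ a, |π s a - πhat s a| ≤ επ := h1
    linarith
  have hεnn : 0 ≤ επ := by
    have h1 : tv (π (Classical.arbitrary S)) (πhat (Classical.arbitrary S)) ≤ επ :=
      le_trans (Finset.le_sup' (fun s => tv (π s) (πhat s)) (Finset.mem_univ _)) hεπ
    have h2 : (0 : ℝ) ≤ tv (π (Classical.arbitrary S)) (πhat (Classical.arbitrary S)) := by
      unfold tv
      positivity
    linarith
  -- L1 bound on occupancy gap
  have hL1 : ∀ t, ∑ sa : S × A, |P t sa - Phat t sa| ≤ 2 * (t + 1) * επ := by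
    intro t
    induction t with
    | zero =>
      calc ∑ sa : S × A, |P 0 sa - Phat 0 sa|
          = ∑ s, ∑ a, μ0 s * |π s a - πhat s a| := by
            rw [Fintype.sum_prod_type]
            refine Finset.sum_congr rfl fun s _ => Finset.sum_congr rfl fun a _ => ?_
            rw [hP0, hPhat0, ← mul_sub, abs_mul, abs_of_nonneg (hμ0.1 s)]
        _ = ∑ s, μ0 s * ∑ a, |π s a - πhat s a| := by simp [Finset.mul_sum]
        _ ≤ ∑ s, μ0 s * (2 * επ) := by
            exact Finset.sum_le_sum fun s _ => mul_le_mul_of_nonneg_left (hδ s) (hμ0.1 s)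
        _ = 2 * (↑(0:ℕ) + 1) * επ := by rw [← Finset.sum_mul, hμ0.2]; norm_num
    | succ t ih =>
      have key : ∀ x : S × A, P (t + 1) x - Phat (t + 1) x
          = (∑ sa : S × A, (P t sa - Phat t sa) * T sa x.1 * π x.1 x.2)
            + ∑ sa : S × A, Phat t sa * T sa x.1 * (π x.1 x.2 - πhat x.1 x.2) := by
        intro x
        rw [hPrec, hPhatrec, ← Finset.sum_add_distrib, ← Finset.sum_sub_distrib]
        exact Finset.sum_congr rfl fun sa _ => by ring
      calc ∑ x : S × A, |P (t + 1) x - Phat (t + 1) x|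
          ≤ ∑ x : S × A, ((∑ sa : S × A, |P t sa - Phat t sa| * T sa x.1 * π x.1 x.2)
              + ∑ sa : S × A, Phat t sa * T sa x.1 * |π x.1 x.2 - πhat x.1 x.2|) := by
            refine Finset.sum_le_sum fun x _ => ?_
            rw [key x]
            refine le_trans (abs_add_le _ _) (add_le_add ?_ ?_)
            · refine le_trans (Finset.abs_sum_le_sum_abs _ _) (le_of_eq ?_)
              refine Finset.sum_congr rfl fun sa _ => ?_
              rw [abs_mul, abs_mul, abs_of_nonneg ((hT sa).1 _),
                abs_of_nonneg ((hπ _).1 _)]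
            · refine le_trans (Finset.abs_sum_le_sum_abs _ _) (le_of_eq ?_)
              refine Finset.sum_congr rfl fun sa _ => ?_
              rw [abs_mul, abs_mul, abs_of_nonneg ((hProbhat t).1 sa),
                abs_of_nonneg ((hT sa).1 _)]
        _ = (∑ x : S × A, ∑ sa : S × A, |P t sa - Phat t sa| * T sa x.1 * π x.1 x.2)
            + ∑ x : S × A, ∑ sa : S × A, Phat t sa * T sa x.1 * |π x.1 x.2 - πhat x.1 x.2| :=
            Finset.sum_add_distrib
        _ ≤ 2 * (t + 1) * επ + 2 * επ := by
            refine add_le_add ?_ ?_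
            · calc ∑ x : S × A, ∑ sa : S × A, |P t sa - Phat t sa| * T sa x.1 * π x.1 x.2
                  = ∑ sa : S × A, ∑ x : S × A, |P t sa - Phat t sa| * T sa x.1 * π x.1 x.2 :=
                    Finset.sum_comm
                _ = ∑ sa : S × A, |P t sa - Phat t sa| := by
                    refine Finset.sum_congr rfl fun sa _ => ?_
                    rw [show (∑ x : S × A, |P t sa - Phat t sa| * T sa x.1 * π x.1 x.2)
                        = |P t sa - Phat t sa| * ∑ x : S × A, T sa x.1 * π x.1 x.2 by
                      rw [Finset.mul_sum]; exact Finset.sum_congr rfl fun x _ => by ring]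
                    rw [show (∑ x : S × A, T sa x.1 * π x.1 x.2) = 1 by
                      rw [Fintype.sum_prod_type]
                      calc ∑ s', ∑ a', T sa s' * π s' a'
                          = ∑ s', T sa s' * ∑ a', π s' a' := by simp [Finset.mul_sum]
                        _ = ∑ s', T sa s' := by
                            simp [(fun s => (hπ s).2 : ∀ s, ∑ a, π s a = 1)]
                        _ = 1 := (hT sa).2]
                    rw [mul_one]
                _ ≤ 2 * (t + 1) * επ := ih
            · calc ∑ x : S × A, ∑ sa : S × A, Phat t sa * T sa x.1 * |π x.1 x.2 - πhat x.1 x.2|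
                  = ∑ s', ∑ a', (∑ sa : S × A, Phat t sa * T sa s') * |π s' a' - πhat s' a'| := by
                    rw [Fintype.sum_prod_type]
                    refine Finset.sum_congr rfl fun s' _ => Finset.sum_congr rfl fun a' _ => ?_
                    rw [Finset.sum_mul]
                _ = ∑ s', (∑ sa : S × A, Phat t sa * T sa s') * ∑ a', |π s' a' - πhat s' a'| := by
                    simp [Finset.mul_sum]
                _ ≤ ∑ s', (∑ sa : S × A, Phat t sa * T sa s') * (2 * επ) := by
                    refine Finset.sum_le_sum fun s' _ => mul_le_mul_of_nonneg_left (hδ s') ?_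
                    exact Finset.sum_nonneg fun sa _ =>
                      mul_nonneg ((hProbhat t).1 sa) ((hT sa).1 _)
                _ = 2 * επ := by
                    rw [← Finset.sum_mul,
                      show (∑ s', ∑ sa : S × A, Phat t sa * T sa s') = 1 by
                        rw [Finset.sum_comm]
                        calc ∑ sa : S × A, ∑ s', Phat t sa * T sa s'
                            = ∑ sa : S × A, Phat t sa := by
                              refine Finset.sum_congr rfl fun sa _ => ?_
                              rw [← Finset.mul_sum, (hT sa).2, mul_one]
                          _ = 1 := (hProbhat t).2,
                      one_mul]
        _ = 2 * (↑(t + 1) + 1) * επ := by push_cast; ring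
  -- per-time reward gap
  have hgap : ∀ t : ℕ, |(∑ sa : S × A, P t sa * r sa) - ∑ sa : S × A, Phat t sa * r sa|
      ≤ 2 * (t + 1) * επ * rmax := by
    intro t
    calc |(∑ sa : S × A, P t sa * r sa) - ∑ sa : S × A, Phat t sa * r sa|
        = |∑ sa : S × A, (P t sa - Phat t sa) * r sa| := by
          rw [← Finset.sum_sub_distrib]
          congr 1
          exact Finset.sum_congr rfl fun sa _ => by ring
      _ ≤ ∑ sa : S × A, |P t sa - Phat t sa| * |r sa| := by
          refine le_trans (Finset.abs_sum_le_sum_abs _ _) (le_of_eq ?_)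
          exact Finset.sum_congr rfl fun sa _ => abs_mul _ _
      _ ≤ ∑ sa : S × A, |P t sa - Phat t sa| * rmax := by
          exact Finset.sum_le_sum fun sa _ =>
            mul_le_mul_of_nonneg_left (hr sa) (abs_nonneg _)
      _ = (∑ sa : S × A, |P t sa - Phat t sa|) * rmax := (Finset.sum_mul _ _ _).symm
      _ ≤ 2 * (t + 1) * επ * rmax := mul_le_mul_of_nonneg_right (hL1 t) hrmax
  -- per-time absolute reward bound
  have habs : ∀ (Q : ℕ → S × A → ℝ) (hQ : ∀ t, (∀ sa, 0 ≤ Q t sa) ∧ ∑ sa, Q t sa = 1) (t : ℕ),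
      |∑ sa : S × A, Q t sa * r sa| ≤ rmax := by
    intro Q hQ t
    calc |∑ sa : S × A, Q t sa * r sa| ≤ ∑ sa : S × A, Q t sa * |r sa| := by
          refine le_trans (Finset.abs_sum_le_sum_abs _ _) (le_of_eq ?_)
          exact Finset.sum_congr rfl fun sa _ => by
            rw [abs_mul, abs_of_nonneg ((hQ t).1 sa)]
      _ ≤ ∑ sa : S × A, Q t sa * rmax :=
          Finset.sum_le_sum fun sa _ => mul_le_mul_of_nonneg_left (hr sa) ((hQ t).1 sa)
      _ = rmax := by rw [← Finset.sum_mul, (hQ t).2, one_mul]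
  -- summability
  have hγnorm : ‖γ‖ < 1 := by rwa [Real.norm_eq_abs, abs_of_nonneg hγ0]
  have hgeo : Summable fun t : ℕ => γ ^ t := summable_geometric_of_lt_one hγ0 hγ1
  have hsumF : ∀ (Q : ℕ → S × A → ℝ) (hQ : ∀ t, (∀ sa, 0 ≤ Q t sa) ∧ ∑ sa, Q t sa = 1),
      Summable fun t : ℕ => γ ^ t * ∑ sa : S × A, Q t sa * r sa := by
    intro Q hQ
    refine Summable.of_norm_bounded (hgeo.mul_right rmax) fun t => ?_
    rw [Real.norm_eq_abs, abs_mul, abs_pow, abs_of_nonneg hγ0]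
    exact mul_le_mul_of_nonneg_left (habs Q hQ t) (pow_nonneg hγ0 t)
  have hSP := hsumF P hProb
  have hSPhat := hsumF Phat hProbhat
  -- the series ∑ (t+1) γ^t
  have hhs : HasSum (fun t : ℕ => ((t : ℝ) + 1) * γ ^ t) (1 / (1 - γ) ^ 2) := by
    have h1 : HasSum (fun t : ℕ => (t : ℝ) * γ ^ t) (γ / (1 - γ) ^ 2) :=
      hasSum_coe_mul_geometric_of_norm_lt_one hγnorm
    have h2 : HasSum (fun t : ℕ => γ ^ t) (1 / (1 - γ)) := by
      simpa [one_div] using hasSum_geometric_of_lt_one hγ0 hγ1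
    have h3 := h1.add h2
    have hne : (1 : ℝ) - γ ≠ 0 := by linarith
    have heq : γ / (1 - γ) ^ 2 + 1 / (1 - γ) = 1 / (1 - γ) ^ 2 := by
      field_simp
      ring
    rw [← heq]
    exact h3.congr_fun fun t => by ring
  have hsumG : Summable fun t : ℕ => γ ^ t * (↑t + 1) * επ :=
    ((hhs.summable.mul_right επ).congr (fun t => by ring))
  -- main bound
  have hdiff : Summable fun t : ℕ =>
      γ ^ t * (∑ sa : S × A, P t sa * r sa) - γ ^ t * ∑ sa : S × A, Phat t sa * r sa :=
    hSP.sub hSPhat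
  constructor
  · have h1 : (∑' t : ℕ, γ ^ t * ∑ sa : S × A, P t sa * r sa)
        - (∑' t : ℕ, γ ^ t * ∑ sa : S × A, Phat t sa * r sa)
        = ∑' t : ℕ, (γ ^ t * (∑ sa : S × A, P t sa * r sa)
            - γ ^ t * ∑ sa : S × A, Phat t sa * r sa) := (Summable.tsum_sub hSP hSPhat).symm
    rw [h1]
    have hb : ∀ t : ℕ, ‖γ ^ t * (∑ sa : S × A, P t sa * r sa)
        - γ ^ t * ∑ sa : S × A, Phat t sa * r sa‖
        ≤ 2 * rmax * (γ ^ t * (↑t + 1) * επ) := by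
      intro t
      rw [Real.norm_eq_abs, ← mul_sub, abs_mul, abs_pow, abs_of_nonneg hγ0]
      calc γ ^ t * |(∑ sa : S × A, P t sa * r sa) - ∑ sa : S × A, Phat t sa * r sa|
          ≤ γ ^ t * (2 * (t + 1) * επ * rmax) :=
            mul_le_mul_of_nonneg_left (hgap t) (pow_nonneg hγ0 t)
        _ = 2 * rmax * (γ ^ t * (↑t + 1) * επ) := by ring
    calc |∑' t : ℕ, (γ ^ t * (∑ sa : S × A, P t sa * r sa)
            - γ ^ t * ∑ sa : S × A, Phat t sa * r sa)|
        ≤ ∑' t : ℕ, 2 * rmax * (γ ^ t * (↑t + 1) * επ) := by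
          rw [← Real.norm_eq_abs]
          exact tsum_of_norm_bounded (hsumG.mul_left (2 * rmax)).hasSum hb
      _ = 2 * rmax * ∑' t : ℕ, γ ^ t * (↑t + 1) * επ := tsum_mul_left
  · have h2 : (∑' t : ℕ, γ ^ t * (↑t + 1) * επ) = (1 / (1 - γ) ^ 2) * επ := by
      rw [show (fun t : ℕ => γ ^ t * (↑t + 1) * επ)
          = fun t : ℕ => ((t : ℝ) + 1) * γ ^ t * επ from funext fun t => by ring]
      rw [tsum_mul_right, hhs.tsum_eq]
    rw [h2]
    ring
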